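/- A non-trivial weighted arithmetic mean X_w of calibrated predictions satisfies Var(X_w) < max(Var(X₁), ..., Var(X_N)), hence X_w is not extremizing. -/

import Mathlib

open MeasureTheory ProbabilityTheory

lemma integrable_mul_of_memL2 {Ω : Type*} [MeasurableSpace Ω] {μ : Measure Ω}
    {f g : Ω → ℝ} (hf : MemLp f 2 μ) (hg : MemLp g 2 μ) :
    Integrable (fun ω => f ω * g ω) μ := by
  have h : MemLp (f • g) 1 μ :=
    hg.smul hf
  rw [memLp_one_iff_integrable] at h
  exact h

lemma variance_eq_integral_sq {Ω : Type*} [MeasurableSpace Ω] {μ : Measure Ω}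
    [IsFiniteMeasure μ] {f : Ω → ℝ} (hf : MemLp f 2 μ) :
    variance f μ = ∫ ω, (f ω - μ[f]) ^ 2 ∂μ := by
  rw [variance_eq_integral hf.aemeasurable]

/-- A non-trivial weighted arithmetic mean `X_w` of calibrated predictions satisfies
`Var(X_w) < max(Var(X₁), ..., Var(X_N))`; hence `X_w` is not extremizing. -/
theorem weighted_mean_variance_lt_max
    {Ω : Type*} [m : MeasurableSpace Ω] (μ : Measure Ω) [IsProbabilityMeasure μ]
    {N : ℕ} (Y : Ω → ℝ) (X : Fin N → Ω → ℝ) (w : Fin N → ℝ)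
    (hY : MemLp Y 2 μ) (hX : ∀ j, MemLp (X j) 2 μ)
    (hw : ∀ j, 0 ≤ w j) (hw1 : ∑ j, w j = 1)
    (hle : ∀ j, MeasurableSpace.comap (X j) Real.measurableSpace ≤ m)
    (hcal : ∀ j, X j =ᵐ[μ] μ[Y | MeasurableSpace.comap (X j) Real.measurableSpace])
    (hnontriv : ∃ i j : Fin N, i ≠ j ∧ 0 < w i ∧ 0 < w j ∧
      0 < μ {ω | X i ω ≠ X j ω})
    (hne : (Finset.univ : Finset (Fin N)).Nonempty) :
    variance (fun ω => ∑ j, w j * X j ω) μ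
      < Finset.univ.sup' hne (fun j => variance (X j) μ) := by
  classical
  obtain ⟨i₀, j₀, hij, hwi, hwj, hdis⟩ := hnontriv
  set M := Finset.univ.sup' hne (fun j => variance (X j) μ) with hM
  have hYint : Integrable Y μ := hY.integrable one_le_two
  -- all means equal the mean of Y
  have hmean : ∀ j, μ[X j] = μ[Y] := by
    intro j
    haveI : SigmaFinite (μ.trim (hle j)) :=
      (isFiniteMeasure_trim (hle j)).toSigmaFinite
    have h1 := integral_congr_ae (hcal j)
    rw [h1, integral_condExp (hle j)]
  -- centered predictions
  set Z : Fin N → Ω → ℝ := fun j ω => X j ω - μ[Y] with hZdef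
  have hZ : ∀ j, MemLp (Z j) 2 μ := fun j => (hX j).sub (memLp_const _)
  have hZmul : ∀ i j, Integrable (fun ω => Z i ω * Z j ω) μ :=
    fun i j => integrable_mul_of_memL2 (hZ i) (hZ j)
  have hZsq : ∀ j, Integrable (fun ω => Z j ω ^ 2) μ := fun j => (hZ j).integrable_sq
  -- variance via centered functions
  have hVarZ : ∀ j, variance (X j) μ = ∫ ω, Z j ω ^ 2 ∂μ := by
    intro j
    rw [variance_eq_integral_sq (hX j), hmean j]
  -- covariance
  set c : Fin N → Fin N → ℝ := fun i j => ∫ ω, Z i ω * Z j ω ∂μ with hc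
  have hVleM : ∀ j, variance (X j) μ ≤ M := fun j =>
    Finset.le_sup' (fun j => variance (X j) μ) (Finset.mem_univ j)
  have hexp : ∀ i j, ∫ ω, (Z i ω - Z j ω) ^ 2 ∂μ
      = variance (X i) μ - 2 * c i j + variance (X j) μ := by
    intro i j
    have h1 : ∀ ω, (Z i ω - Z j ω) ^ 2
        = Z i ω ^ 2 - 2 * (Z i ω * Z j ω) + Z j ω ^ 2 := by intro ω; ring
    have hA : Integrable (fun ω => Z i ω ^ 2 - 2 * (Z i ω * Z j ω)) μ :=
      (hZsq i).sub ((hZmul i j).const_mul 2)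
    have hB : Integrable (fun ω => 2 * (Z i ω * Z j ω)) μ := (hZmul i j).const_mul 2
    simp_rw [h1]
    rw [integral_add hA (hZsq j), integral_sub (hZsq i) hB, integral_const_mul,
      hVarZ i, hVarZ j]
  have hcle : ∀ i j, c i j ≤ M := by
    intro i j
    have h0 : 0 ≤ ∫ ω, (Z i ω - Z j ω) ^ 2 ∂μ :=
      integral_nonneg fun ω => sq_nonneg _
    rw [hexp i j] at h0
    nlinarith [hVleM i, hVleM j]
  have hclt : c i₀ j₀ < M := by
    have h0 : 0 ≤ ∫ ω, (Z i₀ ω - Z j₀ ω) ^ 2 ∂μ :=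
      integral_nonneg fun ω => sq_nonneg _
    have hne0 : ∫ ω, (Z i₀ ω - Z j₀ ω) ^ 2 ∂μ ≠ 0 := by
      intro h0'
      have hint : Integrable (fun ω => (Z i₀ ω - Z j₀ ω) ^ 2) μ := by
        have h1 : ∀ ω, (Z i₀ ω - Z j₀ ω) ^ 2
            = Z i₀ ω ^ 2 - 2 * (Z i₀ ω * Z j₀ ω) + Z j₀ ω ^ 2 := by intro ω; ring
        simp_rw [h1]
        exact ((hZsq i₀).sub ((hZmul i₀ j₀).const_mul 2)).add (hZsq j₀)
      have hae : (fun ω => (Z i₀ ω - Z j₀ ω) ^ 2) =ᵐ[μ] 0 :=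
        (integral_eq_zero_iff_of_nonneg (fun ω => sq_nonneg _) hint).mp h0'
      have haeXY : X i₀ =ᵐ[μ] X j₀ := by
        filter_upwards [hae] with ω hω
        have h2 : Z i₀ ω - Z j₀ ω = 0 := by
          have h3 : (Z i₀ ω - Z j₀ ω) ^ 2 = 0 := hω
          exact pow_eq_zero_iff (two_ne_zero) |>.mp h3
        simp only [hZdef] at h2
        linarith
      have : μ {ω | X i₀ ω ≠ X j₀ ω} = 0 := haeXY
      exact absurd this (ne_of_gt hdis)
    have hpos : 0 < ∫ ω, (Z i₀ ω - Z j₀ ω) ^ 2 ∂μ := lt_of_le_of_ne h0 (Ne.symm hne0)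
    rw [hexp i₀ j₀] at hpos
    nlinarith [hVleM i₀, hVleM j₀]
  -- expand the variance of the weighted mean
  have hS : MemLp (fun ω => ∑ j, w j * X j ω) 2 μ :=
    memLp_finset_sum (Finset.univ : Finset (Fin N))
      (fun j _ => (hX j).const_mul (w j))
  have hSmean : μ[fun ω => ∑ j, w j * X j ω] = μ[Y] := by
    rw [integral_finset_sum _ (fun j _ => ((hX j).integrable one_le_two).const_mul (w j))]
    simp_rw [integral_const_mul, hmean]
    rw [← Finset.sum_mul, hw1, one_mul]
  have hVarS : variance (fun ω => ∑ j, w j * X j ω) μ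
      = ∑ i, ∑ j, w i * w j * c i j := by
    rw [variance_eq_integral_sq hS, hSmean]
    have h1 : ∀ ω, ((∑ j, w j * X j ω) - μ[Y]) ^ 2
        = ∑ i, ∑ j, w i * w j * (Z i ω * Z j ω) := by
      intro ω
      have h2 : (∑ j, w j * X j ω) - μ[Y] = ∑ j, w j * Z j ω := by
        simp only [hZdef, mul_sub]
        rw [Finset.sum_sub_distrib, ← Finset.sum_mul, hw1, one_mul]
      rw [h2, sq, Finset.sum_mul_sum]
      refine Finset.sum_congr rfl fun i _ => Finset.sum_congr rfl fun j _ => by ring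
    calc ∫ ω, ((∑ j, w j * X j ω) - μ[Y]) ^ 2 ∂μ
        = ∫ ω, ∑ i, ∑ j, w i * w j * (Z i ω * Z j ω) ∂μ :=
          integral_congr_ae (Filter.Eventually.of_forall h1)
      _ = ∑ i, ∑ j, w i * w j * c i j := by
          rw [integral_finset_sum _ (fun i _ =>
            integrable_finset_sum _ (fun j _ => (hZmul i j).const_mul _))]
          refine Finset.sum_congr rfl fun i _ => ?_
          rw [integral_finset_sum _ (fun j _ => (hZmul i j).const_mul _)]
          exact Finset.sum_congr rfl fun j _ => integral_const_mul _ _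
  -- conclude
  rw [hVarS]
  have hMsum : ∑ i : Fin N, ∑ j : Fin N, w i * w j * M = M := by
    have h : ∀ i, ∑ j, w i * w j * M = w i * M := by
      intro i
      simp_rw [mul_assoc, ← Finset.mul_sum, ← Finset.sum_mul, hw1, one_mul]
    simp_rw [h, ← Finset.sum_mul, hw1, one_mul]
  calc ∑ i, ∑ j, w i * w j * c i j < ∑ i : Fin N, ∑ j : Fin N, w i * w j * M := by
        apply Finset.sum_lt_sum
        · intro i _
          exact Finset.sum_le_sum fun j _ =>
            mul_le_mul_of_nonneg_left (hcle i j) (mul_nonneg (hw i) (hw j))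
        · refine ⟨i₀, Finset.mem_univ i₀, ?_⟩
          apply Finset.sum_lt_sum
          · intro j _
            exact mul_le_mul_of_nonneg_left (hcle i₀ j) (mul_nonneg (hw i₀) (hw j))
          · exact ⟨j₀, Finset.mem_univ j₀,
              mul_lt_mul_of_pos_left hclt (mul_pos hwi hwj)⟩
    _ = M := hMsum
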